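/- Let K be a field complete with respect to a nontrivial non-archimedean absolute value, and f(T) = Σ_{k≥0} a_k T^k a power series over K with |a_k| → 0 and not all a_k zero. Let A = max_k |a_k| and let m = min{k : |a_k| = A}. Then f has at most m zeros α ∈ K with |α| < 1. -/
import Mathlib


open Filter IsUltrametricDist

private lemma strass_summable {K : Type*} [NontriviallyNormedField K] [IsUltrametricDist K]
    [CompleteSpace K] {ι : Type*} {f : ι → K}
    (h : Tendsto (fun i => ‖f i‖) cofinite (nhds 0)) : Summable f :=
  NonarchimedeanAddGroup.summable_of_tendsto_cofinite_zero
    (tendsto_zero_iff_norm_tendsto_zero.mpr h)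

private lemma strass_aux {K : Type*} [NontriviallyNormedField K] [IsUltrametricDist K]
    [CompleteSpace K] :
    ∀ (m : ℕ) (a : ℕ → K), Tendsto (fun k => ‖a k‖) atTop (nhds 0) →
    ∀ (A : ℝ), (∀ k, ‖a k‖ ≤ A) → ‖a m‖ = A → a m ≠ 0 →
    (∀ k, ‖a k‖ = A → m ≤ k) →
    {α : K | ‖α‖ < 1 ∧ HasSum (fun k => a k * α ^ k) 0}.Finite ∧
      {α : K | ‖α‖ < 1 ∧ HasSum (fun k => a k * α ^ k) 0}.ncard ≤ m := by
  intro m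
  induction m with
  | zero =>
    intro a ha A hA hm hmne hmmin
    have hA0 : 0 < A := hm ▸ norm_pos_iff.mpr hmne
    have hempty : {α : K | ‖α‖ < 1 ∧ HasSum (fun k => a k * α ^ k) 0} = ∅ := by
      ext α
      simp only [Set.mem_setOf_eq, Set.mem_empty_iff_false, iff_false, not_and]
      intro hα hsum
      have h0 : a 0 * α ^ 0 + ∑' k, a (k + 1) * α ^ (k + 1) = 0 :=
        ((Summable.tsum_eq_zero_add hsum.summable).symm.trans hsum.tsum_eq)
      have htail : ‖∑' k, a (k + 1) * α ^ (k + 1)‖ ≤ A * ‖α‖ := by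
        refine norm_tsum_le_of_forall_le_of_nonneg (by positivity) fun k => ?_
        rw [norm_mul, norm_pow]
        calc ‖a (k + 1)‖ * ‖α‖ ^ (k + 1) ≤ A * ‖α‖ ^ 1 :=
              mul_le_mul (hA _) (pow_le_pow_of_le_one (norm_nonneg _) hα.le (by omega))
                (by positivity) hA0.le
          _ = A * ‖α‖ := by ring
      have heq : a 0 * α ^ 0 = -∑' k, a (k + 1) * α ^ (k + 1) :=
        eq_neg_of_add_eq_zero_left h0
      have : ‖a 0‖ ≤ A * ‖α‖ := by
        calc ‖a 0‖ = ‖a 0 * α ^ 0‖ := by simp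
          _ = ‖-∑' k, a (k + 1) * α ^ (k + 1)‖ := by rw [heq]
          _ = ‖∑' k, a (k + 1) * α ^ (k + 1)‖ := norm_neg _
          _ ≤ A * ‖α‖ := htail
      have hlt : A * ‖α‖ < A := mul_lt_of_lt_one_right hA0 hα
      have : ‖a 0‖ < A := lt_of_le_of_lt this hlt
      exact absurd hm (ne_of_lt this)
    rw [hempty]
    simp
  | succ n ih =>
    intro a ha A hA hm hmne hmmin
    have hA0 : 0 < A := hm ▸ norm_pos_iff.mpr hmne
    set Sf := {α : K | ‖α‖ < 1 ∧ HasSum (fun k => a k * α ^ k) 0} with hSf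
    rcases Set.eq_empty_or_nonempty Sf with hS | ⟨α, hα1, hαsum⟩
    · rw [hS]; simp
    -- basic facts about α
    have hαle1 : ‖α‖ ≤ 1 := hα1.le
    -- the quotient series b
    set b : ℕ → K := fun k => ∑' j, a (k + 1 + j) * α ^ j with hbdef
    have hbs : ∀ k, Summable (fun j => a (k + 1 + j) * α ^ j) := by
      intro k
      apply strass_summable
      rw [Nat.cofinite_eq_atTop]
      refine squeeze_zero (fun j => norm_nonneg _) (fun j => ?_)
        (ha.comp (tendsto_add_atTop_nat (k + 1)))
      rw [norm_mul, norm_pow]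
      have : k + 1 + j = j + (k + 1) := by omega
      rw [this]
      exact mul_le_of_le_one_right (norm_nonneg _)
        (pow_le_one₀ (norm_nonneg _) hαle1)
    have hbnorm : ∀ (k : ℕ) (C : ℝ), 0 ≤ C → (∀ j, ‖a (k + 1 + j)‖ * ‖α‖ ^ j ≤ C) →
        ‖b k‖ ≤ C := by
      intro k C hC h
      refine norm_tsum_le_of_forall_le_of_nonneg hC fun j => ?_
      rw [norm_mul, norm_pow]
      exact h j
    have hbA : ∀ k, ‖b k‖ ≤ A := fun k =>
      hbnorm k A hA0.le fun j =>
        le_trans (mul_le_of_le_one_right (norm_nonneg _)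
          (pow_le_one₀ (norm_nonneg _) hαle1)) (hA _)
    have hbtend : Tendsto (fun k => ‖b k‖) atTop (nhds 0) := by
      rw [Metric.tendsto_atTop] at ha ⊢
      intro ε hε
      obtain ⟨N, hN⟩ := ha (ε / 2) (by positivity)
      refine ⟨N, fun k hk => ?_⟩
      have hb2 : ‖b k‖ ≤ ε / 2 := by
        refine hbnorm k (ε / 2) (by positivity) fun j => ?_
        refine le_trans (mul_le_of_le_one_right (norm_nonneg _)
          (pow_le_one₀ (norm_nonneg _) hαle1)) ?_
        have := hN (k + 1 + j) (by omega)
        rw [Real.dist_eq, sub_zero] at this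
        exact le_of_lt (lt_of_abs_lt this)
      rw [Real.dist_eq, sub_zero, abs_of_nonneg (norm_nonneg _)]
      linarith
    -- norm of b n is A
    have hbn_eq : b n = a (n + 1) + ∑' j, a (n + 1 + (j + 1)) * α ^ (j + 1) := by
      rw [hbdef]
      simpa using Summable.tsum_eq_zero_add (hbs n)
    have htail_lt : ‖∑' j, a (n + 1 + (j + 1)) * α ^ (j + 1)‖ ≤ A * ‖α‖ := by
      refine norm_tsum_le_of_forall_le_of_nonneg (by positivity) fun j => ?_
      rw [norm_mul, norm_pow]
      calc ‖a (n + 1 + (j + 1))‖ * ‖α‖ ^ (j + 1) ≤ A * ‖α‖ ^ 1 :=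
            mul_le_mul (hA _) (pow_le_pow_of_le_one (norm_nonneg _) hαle1 (by omega))
              (by positivity) hA0.le
        _ = A * ‖α‖ := by ring
    have hAα : A * ‖α‖ < A := mul_lt_of_lt_one_right hA0 hα1
    have hbm : ‖b n‖ = A := by
      have hne : ‖a (n + 1)‖ ≠ ‖∑' j, a (n + 1 + (j + 1)) * α ^ (j + 1)‖ := by
        rw [hm]
        intro h
        rw [← h] at htail_lt
        linarith
      rw [hbn_eq, norm_add_eq_max_of_norm_ne_norm hne, hm]
      exact max_eq_left (le_of_lt (lt_of_le_of_lt htail_lt hAα))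
    have hbne : b n ≠ 0 := by
      intro h
      rw [h, norm_zero] at hbm
      linarith
    have hbmin : ∀ k, ‖b k‖ = A → n ≤ k := by
      intro k hk
      by_contra hlt
      push_neg at hlt
      have hne : (Finset.range (n + 1)).Nonempty := ⟨0, by simp⟩
      set C := max (A * ‖α‖) ((Finset.range (n + 1)).sup' hne fun j => ‖a j‖) with hCdef
      have hCA : C < A := by
        refine max_lt hAα ?_
        rw [Finset.sup'_lt_iff]
        intro j hj
        rw [Finset.mem_range] at hj
        refine lt_of_le_of_ne (hA j) fun h => ?_
        have := hmmin j h
        omega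
      have hC0 : 0 ≤ C := le_trans (by positivity) (le_max_left _ _)
      have hbk : ‖b k‖ ≤ C := by
        refine hbnorm k C hC0 fun j => ?_
        by_cases hj : k + 1 + j < n + 1
        · refine le_trans (mul_le_of_le_one_right (norm_nonneg _)
            (pow_le_one₀ (norm_nonneg _) hαle1)) ?_
          exact le_trans (Finset.le_sup' (f := fun j => ‖a j‖) (Finset.mem_range.mpr hj))
            (le_max_right _ _)
        · have hj1 : 1 ≤ j := by omega
          refine le_trans ?_ (le_max_left _ _)
          calc ‖a (k + 1 + j)‖ * ‖α‖ ^ j ≤ A * ‖α‖ ^ 1 :=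
                mul_le_mul (hA _) (pow_le_pow_of_le_one (norm_nonneg _) hαle1 hj1)
                  (by positivity) hA0.le
            _ = A * ‖α‖ := by ring
      rw [hk] at hbk
      linarith
    -- zeros of f other than α are zeros of g
    set Sg := {β : K | ‖β‖ < 1 ∧ HasSum (fun k => b k * β ^ k) 0} with hSg
    obtain ⟨hgfin0, hgcard0⟩ := ih b hbtend A hbA hbm hbne hbmin
    have hgfin : Sg.Finite := hgfin0
    have hgcard : Sg.ncard ≤ n := hgcard0
    have hsub : Sf ⊆ insert α Sg := by
      rintro β ⟨hβ1, hβsum⟩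
      by_cases hβα : β = α
      · exact Or.inl hβα
      refine Or.inr ⟨hβ1, ?_⟩
      -- double series
      set F : ℕ × ℕ → K := fun p => a (p.1 + 1 + p.2) * α ^ p.2 * β ^ p.1 with hFdef
      have hidx : Tendsto (fun p : ℕ × ℕ => p.1 + 1 + p.2) cofinite atTop := by
        rw [tendsto_atTop]
        intro N
        rw [eventually_cofinite]
        refine Set.Finite.subset ((Set.finite_Iio N).prod (Set.finite_Iio N)) ?_
        intro p hp
        simp only [Set.mem_setOf_eq, not_le] at hp
        constructor <;> (simp only [Set.mem_Iio]; omega)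
      have hFsum : Summable F := by
        apply strass_summable
        refine squeeze_zero (g := fun p : ℕ × ℕ => ‖a (p.1 + 1 + p.2)‖)
          (fun p => norm_nonneg _) (fun p => ?_) (ha.comp hidx)
        show ‖F p‖ ≤ ‖a (p.1 + 1 + p.2)‖
        rw [hFdef]
        simp only [norm_mul, norm_pow]
        calc ‖a (p.1 + 1 + p.2)‖ * ‖α‖ ^ p.2 * ‖β‖ ^ p.1
            ≤ ‖a (p.1 + 1 + p.2)‖ * 1 * 1 := by
              refine mul_le_mul (mul_le_mul le_rfl (pow_le_one₀ (norm_nonneg _) hαle1)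
                (by positivity) (norm_nonneg _)) (pow_le_one₀ (norm_nonneg _) hβ1.le)
                (by positivity) (by positivity)
          _ = ‖a (p.1 + 1 + p.2)‖ := by ring
      set S := ∑' p, F p with hSdef
      have hFS : HasSum F S := hFsum.hasSum
      have hrow : ∀ i, HasSum (fun j => F (i, j)) (b i * β ^ i) := fun i =>
        (hbs i).hasSum.mul_right (β ^ i)
      have hg : HasSum (fun i => b i * β ^ i) S := hFS.prod_fiberwise hrow
      -- regroup
      set F' : ℕ × ℕ → K :=
        fun p => if p.2 < p.1 then a p.1 * α ^ (p.1 - 1 - p.2) * β ^ p.2 else 0 with hF'def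
      set e : ℕ × ℕ → ℕ × ℕ := fun p => (p.1 + 1 + p.2, p.1) with hedef
      have he : Function.Injective e := by
        intro p q h
        rw [hedef, Prod.ext_iff] at h
        simp only at h
        ext
        · omega
        · omega
      have hFe : F' ∘ e = F := by
        funext p
        simp only [Function.comp, hedef, hF'def, hFdef]
        rw [if_pos (by omega), show p.1 + 1 + p.2 - 1 - p.1 = p.2 from by omega]
      have hrange : ∀ x ∉ Set.range e, F' x = 0 := by
        intro x hx
        rw [hF'def]
        simp only
        rw [if_neg]
        intro hlt
        exact hx ⟨(x.2, x.1 - 1 - x.2), by rw [hedef]; ext <;> simp <;> omega⟩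
      have hF' : HasSum F' S := (he.hasSum_iff hrange).mp (by rw [hFe]; exact hFS)
      set c : ℕ → K := fun k => ∑ i ∈ Finset.range k, F' (k, i) with hcdef
      have hrow' : ∀ k, HasSum (fun i => F' (k, i)) (c k) := by
        intro k
        refine hasSum_sum_of_ne_finset_zero fun i hi => ?_
        rw [Finset.mem_range] at hi
        rw [hF'def]
        simp only
        rw [if_neg (by omega)]
      have hc : HasSum c S := hF'.prod_fiberwise hrow'
      have hkey : ∀ k, c k * (β - α) = a k * (β ^ k - α ^ k) := by
        intro k
        have hck : c k = a k * ∑ i ∈ Finset.range k, β ^ i * α ^ (k - 1 - i) := by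
          rw [hcdef, Finset.mul_sum]
          refine Finset.sum_congr rfl fun i hi => ?_
          rw [Finset.mem_range] at hi
          rw [hF'def]
          simp only
          rw [if_pos hi]
          ring
        rw [hck, mul_assoc, geom_sum₂_mul]
      have hsum2 : HasSum (fun k => a k * (β ^ k - α ^ k)) (S * (β - α)) := by
        have := hc.mul_right (β - α)
        rwa [show (fun k => c k * (β - α)) = fun k => a k * (β ^ k - α ^ k) from
          funext hkey] at this
      have hsum3 : HasSum (fun k => a k * (β ^ k - α ^ k)) 0 := by
        have := hβsum.sub hαsum
        simpa [mul_sub] using this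
      have hS0 : S * (β - α) = 0 := hsum2.unique hsum3
      have hSzero : S = 0 := by
        rcases mul_eq_zero.mp hS0 with h | h
        · exact h
        · exact absurd (sub_eq_zero.mp h) hβα
      rwa [hSzero] at hg
    refine ⟨(hgfin.insert α).subset hsub, ?_⟩
    calc Sf.ncard ≤ (insert α Sg).ncard := Set.ncard_le_ncard hsub (hgfin.insert α)
      _ ≤ Sg.ncard + 1 := Set.ncard_insert_le _ _
      _ ≤ n + 1 := by omega

/-- **Complement to Strassmann's theorem.**
Let `K` be a field complete with respect to a nontrivial non-archimedean absolute value,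
and let `f(T) = Σ_{k≥0} a k * T^k` be a power series over `K` with `‖a k‖ → 0` and not all
`a k` zero.  Let `A = max_k ‖a k‖` and `m = min {k | ‖a k‖ = A}`.  Then `f` has at most `m`
zeros `α ∈ K` with `‖α‖ < 1`. -/
theorem strassmann_complement
    (K : Type*) [NontriviallyNormedField K] [IsUltrametricDist K] [CompleteSpace K]
    (a : ℕ → K) (ha : Tendsto (fun k => ‖a k‖) atTop (nhds 0))
    (A : ℝ) (hA : ∀ k, ‖a k‖ ≤ A)
    (m : ℕ) (hm : ‖a m‖ = A) (hmne : a m ≠ 0)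
    (hmmin : ∀ k, ‖a k‖ = A → m ≤ k) :
    {α : K | ‖α‖ < 1 ∧ HasSum (fun k => a k * α ^ k) 0}.Finite ∧
      {α : K | ‖α‖ < 1 ∧ HasSum (fun k => a k * α ^ k) 0}.ncard ≤ m :=
  strass_aux m a ha A hA hm hmne hmmin
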